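/- arXiv:2212.02012 — 5 statements merged into one kernel-verified Lean document; each statement's English description precedes it below -/
import Mathlib

section
/- Let A and B be commuting bounded linear operators on a complex Hilbert space H, both with closed range, such that R(A) = R(A*) (A is both posinormal and coposinormal) and R(B) ⊆ R(B*) (B is posinormal). Then AB has closed range and R(AB) ⊆ R((AB)*). -/
local notation "⟪" x ", " y "⟫" => @inner ℂ _ _ x y

/-- `(range A)ᗮ = ker A†` for a continuous linear map on a Hilbert space. -/
lemma orth_range_eq_ker_adjoint {H : Type*} [NormedAddCommGroup H] [InnerProductSpace ℂ H]
    [CompleteSpace H] (A : H →L[ℂ] H) :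
    (LinearMap.range (A : H →ₗ[ℂ] H))ᗮ = LinearMap.ker (ContinuousLinearMap.adjoint A : H →ₗ[ℂ] H) := by
  ext v
  simp only [Submodule.mem_orthogonal, LinearMap.mem_ker, LinearMap.mem_range]
  constructor
  · intro h
    have h2 : ∀ x : H, ⟪x, (ContinuousLinearMap.adjoint A) v⟫ = 0 := by
      intro x
      rw [ContinuousLinearMap.adjoint_inner_right]
      exact h (A x) ⟨x, rfl⟩
    have := h2 ((ContinuousLinearMap.adjoint A) v)
    rwa [inner_self_eq_zero] at this
  · rintro h u ⟨x, rfl⟩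
    rw [ContinuousLinearMap.coe_coe] at h ⊢; rw [← ContinuousLinearMap.adjoint_inner_right, h, inner_zero_right]

/-- Theorem 4.6: If a closed-range bounded operator `A` on a complex Hilbert space `H`
that is both posinormal and coposinormal (`R(A) = R(A*)`) commutes with a closed-range
posinormal operator `B` (`R(B) ⊆ R(B*)`), then `AB` has closed range and is posinormal. -/
theorem stmt15 {H : Type*} [NormedAddCommGroup H] [InnerProductSpace ℂ H] [CompleteSpace H]
    (A B : H →L[ℂ] H) (hcomm : A ∘L B = B ∘L A)
    (hAran : IsClosed (Set.range A)) (hBran : IsClosed (Set.range B))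
    (hA : LinearMap.range (A : H →ₗ[ℂ] H) = LinearMap.range (ContinuousLinearMap.adjoint A : H →ₗ[ℂ] H))
    (hB : LinearMap.range (B : H →ₗ[ℂ] H) ≤ LinearMap.range (ContinuousLinearMap.adjoint B : H →ₗ[ℂ] H)) :
    IsClosed (Set.range (A ∘L B)) ∧
      LinearMap.range (A ∘L B : H →ₗ[ℂ] H) ≤ LinearMap.range (ContinuousLinearMap.adjoint (A ∘L B) : H →ₗ[ℂ] H) := by
  classical
  set A' := ContinuousLinearMap.adjoint A with hA'def
  set B' := ContinuousLinearMap.adjoint B with hB'def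
  have hc : ∀ x, A (B x) = B (A x) := fun x => by
    simpa using ContinuousLinearMap.ext_iff.mp hcomm x
  have hcomm' : A' ∘L B' = B' ∘L A' := by
    have h := congrArg ContinuousLinearMap.adjoint hcomm
    rw [ContinuousLinearMap.adjoint_comp, ContinuousLinearMap.adjoint_comp] at h
    exact h.symm
  have hc' : ∀ x, A' (B' x) = B' (A' x) := fun x => by
    simpa using ContinuousLinearMap.ext_iff.mp hcomm' x
  set K : Submodule ℂ H := LinearMap.range (A : H →ₗ[ℂ] H) with hKdef
  have hKset : (K : Set H) = Set.range A := rfl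
  have hKclosed : IsClosed (K : Set H) := by rw [hKset]; exact hAran
  haveI : CompleteSpace K := hKclosed.completeSpace_coe
  -- Kᗮ = ker A† = ker A
  have h1 : Kᗮ = LinearMap.ker (A' : H →ₗ[ℂ] H) := orth_range_eq_ker_adjoint A
  have h2 : Kᗮ = LinearMap.ker (A : H →ₗ[ℂ] H) := by
    rw [hA, hA'def, orth_range_eq_ker_adjoint, ContinuousLinearMap.adjoint_adjoint]
  -- B maps K into K
  have hBK : ∀ u ∈ K, B u ∈ K := by
    rintro u ⟨z, rfl⟩
    exact ⟨B z, hc z⟩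
  -- the submodule S = range B ⊓ K
  set S : Submodule ℂ H := LinearMap.range (B : H →ₗ[ℂ] H) ⊓ K with hSdef
  have hSclosed : IsClosed (S : Set H) := by
    rw [hSdef, Submodule.coe_inf]
    exact hBran.inter hKclosed
  have hSK : ∀ w ∈ S, w ∈ K := fun w hw => hw.2
  -- key range identity
  have hrange : Set.range (A ∘L B) = A '' (S : Set H) := by
    ext y
    constructor
    · rintro ⟨x, rfl⟩
      set x₁ : H := (K.orthogonalProjection x : H) with hx₁
      have hx₁K : x₁ ∈ K := (K.orthogonalProjection x).2
      have hx2 : x - x₁ ∈ LinearMap.ker (A : H →ₗ[ℂ] H) := by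
        rw [← h2]; exact K.sub_starProjection_mem_orthogonal x
      refine ⟨B x₁, ⟨⟨x₁, rfl⟩, hBK _ hx₁K⟩, ?_⟩
      have : A (B (x - x₁)) = 0 := by
        rw [hc, show A (x - x₁) = 0 from LinearMap.mem_ker.mp hx2, map_zero]
      have hx : x = x₁ + (x - x₁) := by abel
      calc A (B x₁) = A (B x₁) + A (B (x - x₁)) := by rw [this, add_zero]
        _ = A (B x) := by rw [← map_add, ← map_add, ← hx]
        _ = (A ∘L B) x := rfl
    · rintro ⟨w, ⟨⟨x, rfl⟩, _⟩, rfl⟩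
      exact ⟨x, rfl⟩
  -- A restricted to K is a continuous linear equiv of K
  have hmem : ∀ x : K, (A ∘L K.subtypeL) x ∈ K := fun x => ⟨x, rfl⟩
  set A₁ : K →L[ℂ] K := (A ∘L K.subtypeL).codRestrict K hmem with hA₁def
  have hA₁apply : ∀ x : K, (A₁ x : H) = A x := fun x => rfl
  have hA₁ker : LinearMap.ker (A₁ : K →ₗ[ℂ] K) = ⊥ := by
    rw [LinearMap.ker_eq_bot']
    intro m hm
    have hmK : (m : H) ∈ K := m.2
    have hmker : (m : H) ∈ LinearMap.ker (A : H →ₗ[ℂ] H) := by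
      have : (A₁ m : H) = 0 := by rw [← ContinuousLinearMap.coe_coe, hm]; rfl
      rwa [hA₁apply, ← ContinuousLinearMap.coe_coe, ← LinearMap.mem_ker] at this
    have : (m : H) ∈ Kᗮ := h2 ▸ hmker
    have hz : (m : H) = 0 := by
      have := Submodule.orthogonal_disjoint K
      exact (Submodule.disjoint_def.mp this) _ hmK ‹(m : H) ∈ Kᗮ›
    exact Subtype.ext hz
  have hA₁range : LinearMap.range (A₁ : K →ₗ[ℂ] K) = ⊤ := by
    rw [LinearMap.range_eq_top]
    rintro ⟨y, x, rfl⟩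
    set x₁ : H := (K.orthogonalProjection x : H) with hx₁
    have hx₁K : x₁ ∈ K := (K.orthogonalProjection x).2
    have hx2 : x - x₁ ∈ LinearMap.ker (A : H →ₗ[ℂ] H) := by
      rw [← h2]; exact K.sub_starProjection_mem_orthogonal x
    refine ⟨⟨x₁, hx₁K⟩, ?_⟩
    apply Subtype.ext
    rw [ContinuousLinearMap.coe_coe, hA₁apply]
    have : A (x - x₁) = 0 := LinearMap.mem_ker.mp hx2
    have hx : x = x₁ + (x - x₁) := by abel
    calc A x₁ = A x₁ + A (x - x₁) := by rw [this, add_zero]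
      _ = A x := by rw [← map_add, ← hx]
  set e : K ≃L[ℂ] K := ContinuousLinearEquiv.ofBijective A₁ hA₁ker hA₁range with hedef
  have heapply : ∀ x : K, e x = A₁ x := fun x =>
    congrFun (ContinuousLinearEquiv.coeFn_ofBijective A₁ hA₁ker hA₁range) x
  -- closedness
  have hclosed : IsClosed (Set.range (A ∘L B)) := by
    rw [hrange]
    set S₀ : Set K := Subtype.val ⁻¹' (S : Set H) with hS₀def
    have hS₀closed : IsClosed S₀ := hSclosed.preimage continuous_subtype_val
    have himg : A '' (S : Set H) = Subtype.val '' (e '' S₀) := by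
      ext y
      constructor
      · rintro ⟨w, hw, rfl⟩
        refine ⟨e ⟨w, hSK w hw⟩, ⟨⟨w, hSK w hw⟩, hw, rfl⟩, ?_⟩
        rw [heapply, hA₁apply]
      · rintro ⟨z, ⟨m, hm, rfl⟩, rfl⟩
        exact ⟨(m : H), hm, by rw [heapply, hA₁apply]⟩
    rw [himg]
    exact hKclosed.isClosedEmbedding_subtypeVal.isClosedMap _
      (e.toHomeomorph.isClosedMap _ hS₀closed)
  refine ⟨hclosed, ?_⟩
  -- posinormality
  rintro y ⟨x, rfl⟩
  have hyval : (A ∘L B) x = A (B x) := rfl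
  set y := (A ∘L B) x with hy
  have hyK : y ∈ K := ⟨B x, rfl⟩
  have hyB : y ∈ LinearMap.range (B : H →ₗ[ℂ] H) := ⟨A x, (hc x).symm.trans hyval.symm⟩
  obtain ⟨u, hu⟩ := hB hyB
  set u₁ : H := (K.orthogonalProjection u : H) with hu₁
  have hu₁K : u₁ ∈ K := (K.orthogonalProjection u).2
  have hu₂ : u - u₁ ∈ Kᗮ := K.sub_starProjection_mem_orthogonal u
  -- u₁ ∈ range A†
  obtain ⟨z, hz⟩ : u₁ ∈ LinearMap.range (A' : H →ₗ[ℂ] H) := by rw [← hA]; exact hu₁K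
  -- B† u₁ ∈ K
  have hBu₁K : B' u₁ ∈ K := by
    rw [hA]
    exact ⟨B' z, by rw [ContinuousLinearMap.coe_coe, hc', ← ContinuousLinearMap.coe_coe A', hz]⟩
  -- B† (u - u₁) ∈ Kᗮ
  have hBu₂ : B' (u - u₁) ∈ Kᗮ := by
    rw [h1]
    have : A' (u - u₁) = 0 := LinearMap.mem_ker.mp (h1 ▸ hu₂)
    rw [LinearMap.mem_ker, ContinuousLinearMap.coe_coe, hc', this, map_zero]
  -- y = B† u₁
  have hysplit : y - B' u₁ = B' (u - u₁) := by
    rw [map_sub, ← hu]; rfl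
  have hyorth : y - B' u₁ ∈ Kᗮ := hysplit ▸ hBu₂
  have hymem : y - B' u₁ ∈ K := K.sub_mem hyK hBu₁K
  have hyeq : y = B' u₁ :=
    sub_eq_zero.mp ((Submodule.disjoint_def.mp (Submodule.orthogonal_disjoint K)) _ hymem hyorth)
  refine ⟨z, ?_⟩
  rw [ContinuousLinearMap.coe_coe, ContinuousLinearMap.coe_coe, ContinuousLinearMap.adjoint_comp, ContinuousLinearMap.comp_apply, ← hB'def, ← hA'def,
    ← ContinuousLinearMap.coe_coe A', hz, ← hyeq]
end

section
/- Let A and B be commuting bounded linear operators on a complex Hilbert space H, both with closed range, satisfying R(A) = R(A*) and R(B) = R(B*). Then AB has closed range and R(AB) = R((AB)*). -/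
open ContinuousLinearMap in
/-- Kernel of an operator whose range equals the range of its adjoint is the
orthogonal complement of its range. -/
lemma aux_ker_eq_orthogonal {H : Type*} [NormedAddCommGroup H] [InnerProductSpace ℂ H]
    [CompleteSpace H] (B : H →L[ℂ] H)
    (hB : LinearMap.range (B : H →ₗ[ℂ] H) = LinearMap.range ((ContinuousLinearMap.adjoint B) : H →ₗ[ℂ] H)) :
    LinearMap.ker (B : H →ₗ[ℂ] H) = (LinearMap.range (B : H →ₗ[ℂ] H))ᗮ := by
  have hker : ∀ (T : H →L[ℂ] H), LinearMap.ker ((adjoint T) : H →ₗ[ℂ] H) = (LinearMap.range (T : H →ₗ[ℂ] H))ᗮ := by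
    intro T
    ext x
    simp only [LinearMap.mem_ker, Submodule.mem_orthogonal, ContinuousLinearMap.coe_coe]
    constructor
    · rintro h u ⟨y, rfl⟩
      rw [ContinuousLinearMap.coe_coe, ← ContinuousLinearMap.adjoint_inner_right]
      simp [h]
    · intro h
      rw [← inner_self_eq_zero (𝕜 := ℂ)]
      rw [ContinuousLinearMap.adjoint_inner_right]
      exact h _ ⟨_, rfl⟩
  calc LinearMap.ker (B : H →ₗ[ℂ] H) = LinearMap.ker ((adjoint (adjoint B)) : H →ₗ[ℂ] H) := by
        rw [ContinuousLinearMap.adjoint_adjoint]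
    _ = (LinearMap.range ((adjoint B) : H →ₗ[ℂ] H))ᗮ := hker _
    _ = (LinearMap.range (B : H →ₗ[ℂ] H))ᗮ := by rw [← hB]

open ContinuousLinearMap in
/-- Range of a product of commuting operators where the second is EP. -/
lemma aux_range_comp {H : Type*} [NormedAddCommGroup H] [InnerProductSpace ℂ H]
    [CompleteSpace H] (A B : H →L[ℂ] H) (hcomm : A ∘L B = B ∘L A)
    (hBran : IsClosed (Set.range B))
    (hB : LinearMap.range (B : H →ₗ[ℂ] H) = LinearMap.range ((ContinuousLinearMap.adjoint B) : H →ₗ[ℂ] H)) :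
    LinearMap.range ((A ∘L B) : H →ₗ[ℂ] H) = LinearMap.range (A : H →ₗ[ℂ] H) ⊓ LinearMap.range (B : H →ₗ[ℂ] H) := by
  have hkB : LinearMap.ker (B : H →ₗ[ℂ] H) = (LinearMap.range (B : H →ₗ[ℂ] H))ᗮ := aux_ker_eq_orthogonal B hB
  haveI : CompleteSpace (LinearMap.range (B : H →ₗ[ℂ] H)) := by
    have : IsClosed ((LinearMap.range (B : H →ₗ[ℂ] H) : Submodule ℂ H) : Set H) := by
      simpa [LinearMap.coe_range] using hBran
    exact IsClosed.completeSpace_coe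
  apply le_antisymm
  · rintro x ⟨y, rfl⟩
    refine ⟨⟨B y, rfl⟩, ?_⟩
    have : (A ∘L B) y = (B ∘L A) y := by rw [hcomm]
    rw [ContinuousLinearMap.coe_coe, this]
    exact ⟨A y, rfl⟩
  · rintro x ⟨⟨a, rfl⟩, hxB⟩
    obtain ⟨u1, hu1, u0, hu0, hdec⟩ :=
      (LinearMap.range (B : H →ₗ[ℂ] H)).exists_add_mem_mem_orthogonal a
    rw [← hkB] at hu0
    obtain ⟨v, rfl⟩ := hu1
    have hABv : A (B v) ∈ LinearMap.range (B : H →ₗ[ℂ] H) := by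
      have : A (B v) = B (A v) := congrFun (congrArg DFunLike.coe hcomm) v
      exact this ▸ ⟨A v, rfl⟩
    have hAu0 : A u0 ∈ LinearMap.ker (B : H →ₗ[ℂ] H) := by
      rw [LinearMap.mem_ker]
      have : B (A u0) = A (B u0) := (congrFun (congrArg DFunLike.coe hcomm) u0).symm
      rw [ContinuousLinearMap.coe_coe, this, show B u0 = 0 from hu0, map_zero]
    have hx : A a = A (B v) + A u0 := by rw [hdec, map_add]; rfl
    have hmem : A u0 ∈ LinearMap.range (B : H →ₗ[ℂ] H) ⊓ (LinearMap.range (B : H →ₗ[ℂ] H))ᗮ := by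
      constructor
      · have : A u0 = A a - A (B v) := by rw [hx]; abel
        rw [this]
        exact Submodule.sub_mem _ hxB hABv
      · rw [← hkB]; exact hAu0
    rw [Submodule.inf_orthogonal_eq_bot, Submodule.mem_bot] at hmem
    refine ⟨v, ?_⟩
    show (A ∘L B) v = A a
    rw [ContinuousLinearMap.comp_apply, hx, hmem, add_zero]

/-- Corollary 4.7 (Djordjević's theorem): If `A` and `B` are commuting EP operators on
a complex Hilbert space `H` (closed range and `R(A) = R(A*)`, `R(B) = R(B*)`), then
`AB` is an EP operator: it has closed range and `R(AB) = R((AB)*)`. -/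
theorem stmt16 {H : Type*} [NormedAddCommGroup H] [InnerProductSpace ℂ H] [CompleteSpace H]
    (A B : H →L[ℂ] H) (hcomm : A ∘L B = B ∘L A)
    (hAran : IsClosed (Set.range A)) (hBran : IsClosed (Set.range B))
    (hA : LinearMap.range (A : H →ₗ[ℂ] H) = LinearMap.range ((ContinuousLinearMap.adjoint A : H →L[ℂ] H) : H →ₗ[ℂ] H))
    (hB : LinearMap.range (B : H →ₗ[ℂ] H) = LinearMap.range ((ContinuousLinearMap.adjoint B : H →L[ℂ] H) : H →ₗ[ℂ] H)) :
    IsClosed (Set.range (A ∘L B)) ∧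
      LinearMap.range ((A ∘L B : H →L[ℂ] H) : H →ₗ[ℂ] H) = LinearMap.range ((ContinuousLinearMap.adjoint (A ∘L B) : H →L[ℂ] H) : H →ₗ[ℂ] H) := by
  have hrange : LinearMap.range ((A ∘L B) : H →ₗ[ℂ] H) = LinearMap.range (A : H →ₗ[ℂ] H) ⊓ LinearMap.range (B : H →ₗ[ℂ] H) :=
    aux_range_comp A B hcomm hBran hB
  -- adjoints commute
  have hcomm' : ContinuousLinearMap.adjoint B ∘L ContinuousLinearMap.adjoint A
      = ContinuousLinearMap.adjoint A ∘L ContinuousLinearMap.adjoint B := by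
    rw [← ContinuousLinearMap.adjoint_comp, ← ContinuousLinearMap.adjoint_comp, hcomm]
  -- set-level range equalities for adjoints
  have hAset : Set.range (ContinuousLinearMap.adjoint A) = Set.range A := by
    have := congrArg (fun (s : Submodule ℂ H) => (s : Set H)) hA
    simpa [LinearMap.coe_range] using this.symm
  have hA' : LinearMap.range ((ContinuousLinearMap.adjoint A) : H →ₗ[ℂ] H)
      = LinearMap.range ((ContinuousLinearMap.adjoint (ContinuousLinearMap.adjoint A)) : H →ₗ[ℂ] H) := by
    rw [ContinuousLinearMap.adjoint_adjoint, ← hA]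
  have hA'ran : IsClosed (Set.range (ContinuousLinearMap.adjoint A)) := hAset ▸ hAran
  have hrange' : LinearMap.range ((ContinuousLinearMap.adjoint B ∘L ContinuousLinearMap.adjoint A) : H →ₗ[ℂ] H)
      = LinearMap.range ((ContinuousLinearMap.adjoint B) : H →ₗ[ℂ] H)
        ⊓ LinearMap.range ((ContinuousLinearMap.adjoint A) : H →ₗ[ℂ] H) :=
    aux_range_comp _ _ hcomm' hA'ran hA'
  constructor
  · have : Set.range (A ∘L B) = (Set.range A) ∩ (Set.range B) := by
      have := congrArg (fun (s : Submodule ℂ H) => (s : Set H)) hrange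
      simpa [LinearMap.coe_range, Submodule.coe_inf, ContinuousLinearMap.coe_comp'] using this
    rw [this]
    exact hAran.inter hBran
  · rw [ContinuousLinearMap.adjoint_comp, hrange, hrange', ← hA, ← hB, inf_comm]
end

section
/- There exist a complex Hilbert space H and bounded linear operators A and B on H such that: R(A) and R(B) are closed, R(A) = R(A*), R(B) = R(B*), R(AB) ⊆ R(B), and N(A) ⊆ N(AB), but R(AB) ≠ R((AB)*). (Such a pair exists on H = ℓ²(ℕ, ℂ) ⊕ ℓ²(ℕ, ℂ), with A the orthogonal projection onto the second summand and B a suitable unitary operator.) -/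
set_option synthInstance.maxHeartbeats 1000000
set_option maxHeartbeats 1000000

noncomputable section

local notation "𝓔" => lp (fun _ : ℕ => ℂ) 2
local notation "𝓗" => WithLp 2 ((lp (fun _ : ℕ => ℂ) 2) × (lp (fun _ : ℕ => ℂ) 2))

namespace Stmt17

def consF (a : ℂ) (f : ℕ → ℂ) : ℕ → ℂ
  | 0 => a
  | n + 1 => f n

lemma memℓp_tail (f : 𝓔) : Memℓp (fun n => f (n + 1)) 2 := by
  apply memℓp_gen
  exact (_root_.summable_nat_add_iff 1).2 ((lp.memℓp f).summable (by norm_num))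

lemma memℓp_cons (a : ℂ) (f : 𝓔) : Memℓp (consF a f) 2 := by
  apply memℓp_gen
  apply (_root_.summable_nat_add_iff 1).1
  exact (lp.memℓp f).summable (by norm_num)

def tailE (f : 𝓔) : 𝓔 := ⟨fun n => f (n + 1), memℓp_tail f⟩
def consE (a : ℂ) (f : 𝓔) : 𝓔 := ⟨consF a (⇑f), memℓp_cons a f⟩

@[simp] lemma tailE_apply (f : 𝓔) (n : ℕ) : tailE f n = f (n + 1) := rfl
@[simp] lemma consE_apply_zero (a : ℂ) (f : 𝓔) : consE a f 0 = a := rfl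
@[simp] lemma consE_apply_succ (a : ℂ) (f : 𝓔) (n : ℕ) : consE a f (n + 1) = f n := rfl

lemma lp_ext {f g : 𝓔} (h : ∀ n, f n = g n) : f = g := by
  apply Subtype.ext
  funext n
  exact h n

/-- The bilateral shift as a linear equivalence of `𝓗`. -/
def Blin : 𝓗 ≃ₗ[ℂ] 𝓗 where
  toFun z := WithLp.toLp 2 (consE (z.snd 0) z.fst, tailE z.snd)
  invFun z := WithLp.toLp 2 (tailE z.fst, consE (z.fst 0) z.snd)
  map_add' z w := by
    refine (WithLp.ext_iff 2).2 (Prod.ext ?_ ?_)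
    · apply lp_ext
      intro n
      cases n with
      | zero => simp [lp.coeFn_add]
      | succ n => simp [lp.coeFn_add]
    · apply lp_ext
      intro n
      simp [lp.coeFn_add]
  map_smul' c z := by
    refine (WithLp.ext_iff 2).2 (Prod.ext ?_ ?_)
    · apply lp_ext
      intro n
      cases n with
      | zero => simp [lp.coeFn_smul]
      | succ n => simp [lp.coeFn_smul]
    · apply lp_ext
      intro n
      simp [lp.coeFn_smul]
  left_inv z := by
    refine (WithLp.ext_iff 2).2 (Prod.ext ?_ ?_)
    · apply lp_ext; intro n; rfl
    · apply lp_ext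
      intro n
      cases n with
      | zero => rfl
      | succ n => rfl
  right_inv z := by
    refine (WithLp.ext_iff 2).2 (Prod.ext ?_ ?_)
    · apply lp_ext
      intro n
      cases n with
      | zero => rfl
      | succ n => rfl
    · apply lp_ext; intro n; rfl

local notation "⟪" x ", " y "⟫" => @inner ℂ _ _ x y

lemma inner_consE (a b : ℂ) (f g : 𝓔) :
    ⟪consE a f, consE b g⟫ = ⟪a, b⟫ + ⟪f, g⟫ := by
  rw [lp.inner_eq_tsum, lp.inner_eq_tsum,
    Summable.tsum_eq_zero_add (lp.summable_inner (𝕜 := ℂ) (consE a f) (consE b g))]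
  rfl

lemma inner_tailE (f g : 𝓔) :
    ⟪tailE f, tailE g⟫ = ⟪f, g⟫ - ⟪f 0, g 0⟫ := by
  rw [lp.inner_eq_tsum, lp.inner_eq_tsum,
    Summable.tsum_eq_zero_add (lp.summable_inner (𝕜 := ℂ) f g)]
  have h : (∑' i, ⟪tailE f i, tailE g i⟫) = ∑' b, ⟪f (b + 1), g (b + 1)⟫ := rfl
  rw [h]
  ring

/-- The bilateral shift as an isometry. -/
def Biso : 𝓗 ≃ₗᵢ[ℂ] 𝓗 :=
  Blin.isometryOfInner (by
    intro z w
    rw [WithLp.prod_inner_apply, WithLp.prod_inner_apply]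
    have h1 : (Blin z).ofLp.1 = consE (z.ofLp.2 0) z.ofLp.1 := rfl
    have h2 : (Blin z).ofLp.2 = tailE z.ofLp.2 := rfl
    have h3 : (Blin w).ofLp.1 = consE (w.ofLp.2 0) w.ofLp.1 := rfl
    have h4 : (Blin w).ofLp.2 = tailE w.ofLp.2 := rfl
    rw [h1, h2, h3, h4, inner_consE, inner_tailE]
    ring)


/-- The linear projection onto the second summand. -/
def Alin : 𝓗 →ₗ[ℂ] 𝓗 where
  toFun z := WithLp.toLp 2 ((0 : 𝓔), z.snd)
  map_add' z w := by
    refine (WithLp.ext_iff 2).2 (Prod.ext ?_ ?_)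
    · simp
    · rfl
  map_smul' c z := by
    refine (WithLp.ext_iff 2).2 (Prod.ext ?_ ?_)
    · simp
    · rfl

lemma Alin_norm (z : 𝓗) : ‖Alin z‖ ≤ 1 * ‖z‖ := by
  have h1 : ‖Alin z‖ ^ 2 = ‖(Alin z).fst‖ ^ 2 + ‖(Alin z).snd‖ ^ 2 :=
    WithLp.prod_norm_sq_eq_of_L2 (Alin z)
  have h2 : ‖z‖ ^ 2 = ‖z.fst‖ ^ 2 + ‖z.snd‖ ^ 2 := WithLp.prod_norm_sq_eq_of_L2 z
  have h3 : (Alin z).fst = (0 : 𝓔) := rfl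
  have h4 : (Alin z).snd = z.snd := rfl
  rw [h3, h4] at h1
  simp only [norm_zero] at h1
  nlinarith [norm_nonneg (Alin z), norm_nonneg z, norm_nonneg z.fst]

/-- The orthogonal projection onto the second summand, as a continuous linear map. -/
def Aop : 𝓗 →L[ℂ] 𝓗 := Alin.mkContinuous 1 Alin_norm

@[simp] lemma Aop_apply (z : 𝓗) : Aop z = WithLp.toLp 2 ((0 : 𝓔), z.snd) := rfl

def Bop : 𝓗 →L[ℂ] 𝓗 := (Biso : 𝓗 →L[ℂ] 𝓗)

@[simp] lemma Bop_apply (z : 𝓗) : Bop z = WithLp.toLp 2 (consE (z.snd 0) z.fst, tailE z.snd) := rfl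

local notation "⟪" x ", " y "⟫𝓗" => @inner ℂ 𝓗 _ x y

lemma Aop_adjoint : ContinuousLinearMap.adjoint Aop = Aop := by
  symm
  rw [ContinuousLinearMap.eq_adjoint_iff]
  intro x y
  rw [WithLp.prod_inner_apply, WithLp.prod_inner_apply]
  have h1 : (Aop x).ofLp.1 = (0 : 𝓔) := rfl
  have h2 : (Aop x).ofLp.2 = x.ofLp.2 := rfl
  have h3 : (Aop y).ofLp.1 = (0 : 𝓔) := rfl
  have h4 : (Aop y).ofLp.2 = y.ofLp.2 := rfl
  rw [h1, h2, h3, h4, inner_zero_left, inner_zero_right]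


lemma Bop_adjoint : ContinuousLinearMap.adjoint Bop = (Biso.symm : 𝓗 →L[ℂ] 𝓗) :=
  LinearIsometryEquiv.adjoint_eq_symm Biso

lemma Biso_symm_apply (z : 𝓗) :
    (Biso.symm : 𝓗 →L[ℂ] 𝓗) z = WithLp.toLp 2 (tailE z.fst, consE (z.fst 0) z.snd) := rfl

end Stmt17

open Stmt17 in


/-- Proposition 5.2: On the complex Hilbert space `H = ℓ²(ℕ, ℂ) ⊕ ℓ²(ℕ, ℂ)` there
exist EP operators `A` and `B` (closed range, `R(A) = R(A*)`, `R(B) = R(B*)`) with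
`R(AB) ⊆ R(B)` and `N(A) ⊆ N(AB)`, but such that `AB` is not EP, i.e.
`R(AB) ≠ R((AB)*)`.  (One may take `A` to be the orthogonal projection onto the second
summand and `B` a suitable unitary operator.) -/
theorem stmt17 :
    ∃ A B : WithLp 2 (lp (fun _ : ℕ => ℂ) 2 × lp (fun _ : ℕ => ℂ) 2) →L[ℂ]
        WithLp 2 (lp (fun _ : ℕ => ℂ) 2 × lp (fun _ : ℕ => ℂ) 2),
      IsClosed (Set.range A) ∧ IsClosed (Set.range B) ∧
      LinearMap.range A.toLinearMap = LinearMap.range (ContinuousLinearMap.adjoint A).toLinearMap ∧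
      LinearMap.range B.toLinearMap = LinearMap.range (ContinuousLinearMap.adjoint B).toLinearMap ∧
      LinearMap.range (A ∘L B).toLinearMap ≤ LinearMap.range B.toLinearMap ∧
      LinearMap.ker A.toLinearMap ≤ LinearMap.ker (A ∘L B).toLinearMap ∧
      LinearMap.range (A ∘L B).toLinearMap ≠ LinearMap.range (ContinuousLinearMap.adjoint (A ∘L B)).toLinearMap := by
  refine ⟨Aop, Bop, ?_, ?_, ?_, ?_, ?_, ?_, ?_⟩
  · have hs : Set.range ⇑Aop = {z : 𝓗 | Aop z = z} := by
      ext z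
      constructor
      · rintro ⟨w, rfl⟩
        show Aop (Aop w) = Aop w
        rfl
      · intro h
        exact ⟨z, h⟩
    rw [hs]
    exact isClosed_eq Aop.continuous continuous_id
  · have hr : Set.range ⇑Bop = Set.univ :=
      Set.range_eq_univ.mpr (fun z => ⟨Biso.symm z, Biso.apply_symm_apply z⟩)
    rw [hr]
    exact isClosed_univ
  · rw [Aop_adjoint]
  · have h1 : LinearMap.range Bop.toLinearMap = ⊤ :=
      LinearMap.range_eq_top.mpr (fun z => ⟨Biso.symm z, Biso.apply_symm_apply z⟩)
    have h2 : LinearMap.range (ContinuousLinearMap.adjoint Bop).toLinearMap = ⊤ := by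
      rw [Bop_adjoint]
      exact LinearMap.range_eq_top.mpr (fun z => ⟨Biso z, Biso.symm_apply_apply z⟩)
    rw [h1, h2]
  · have h1 : LinearMap.range Bop.toLinearMap = ⊤ :=
      LinearMap.range_eq_top.mpr (fun z => ⟨Biso.symm z, Biso.apply_symm_apply z⟩)
    rw [h1]
    exact le_top
  · intro z hz
    rw [LinearMap.mem_ker] at hz ⊢
    have hz2 : z.snd = 0 := congrArg WithLp.snd hz
    show Aop (Bop z) = 0
    refine (WithLp.ext_iff 2).2 (Prod.ext ?_ ?_)
    · rfl
    · show tailE z.snd = ((0 : 𝓗)).snd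
      rw [hz2]
      apply lp_ext
      intro n
      show (0 : 𝓔) (n + 1) = ((0 : 𝓗)).snd n
      simp [lp.coeFn_zero]
  · intro h
    have hv1 : (WithLp.toLp 2 ((0 : 𝓔), lp.single 2 0 1) : 𝓗) ∈ LinearMap.range (Aop ∘L Bop).toLinearMap := by
      refine ⟨(WithLp.toLp 2 ((0 : 𝓔), lp.single 2 1 1) : 𝓗), ?_⟩
      show (WithLp.toLp 2 ((0 : 𝓔), tailE (lp.single 2 1 1)) : 𝓗) = (WithLp.toLp 2 ((0 : 𝓔), lp.single 2 0 1) : 𝓗)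
      refine (WithLp.ext_iff 2).2 (Prod.ext rfl ?_)
      apply lp_ext
      intro n
      cases n with
      | zero => rfl
      | succ n => rfl
    rw [h] at hv1
    obtain ⟨x, hx⟩ := hv1
    rw [ContinuousLinearMap.adjoint_comp, Aop_adjoint, Bop_adjoint] at hx
    have hsec : consE (((Aop x).fst) 0) ((Aop x).snd) = lp.single 2 0 1 :=
      congrArg WithLp.snd hx
    have h01 : (0 : ℂ) = 1 := by
      have := congrArg (fun g : 𝓔 => g 0) hsec
      simp only [lp.single_apply_self] at this
      exact absurd this (by norm_num)
    exact zero_ne_one h01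
end
end

section
/- Let n be a natural number and let A : ℂⁿ → ℂⁿ be a linear map. The following are equivalent: (a) ker(A²) = ker(A); (b) for every linear map B : ℂⁿ → ℂⁿ satisfying range(A ∘ B) ⊆ range(B), one has range(A ∘ B) = range(A) ∩ range(B); (c) range(A²) = range(A); (d) rank(A²) = rank(A). -/
open Module

private lemma stmt18_ker_to_range (n : ℕ) (A : (Fin n → ℂ) →ₗ[ℂ] (Fin n → ℂ))
    (h : LinearMap.ker (A ∘ₗ A) = LinearMap.ker A) :
    LinearMap.range (A ∘ₗ A) = LinearMap.range A := by
  apply Submodule.eq_of_le_of_finrank_eq (LinearMap.range_comp_le_range A A)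
  have h1 := LinearMap.finrank_range_add_finrank_ker (A ∘ₗ A)
  have h2 := LinearMap.finrank_range_add_finrank_ker A
  rw [h] at h1
  omega

private lemma stmt18_finrank_to_ker (n : ℕ) (A : (Fin n → ℂ) →ₗ[ℂ] (Fin n → ℂ))
    (h : finrank ℂ (LinearMap.range (A ∘ₗ A)) = finrank ℂ (LinearMap.range A)) :
    LinearMap.ker (A ∘ₗ A) = LinearMap.ker A := by
  symm
  apply Submodule.eq_of_le_of_finrank_eq (LinearMap.ker_le_ker_comp A A)
  have h1 := LinearMap.finrank_range_add_finrank_ker (A ∘ₗ A)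
  have h2 := LinearMap.finrank_range_add_finrank_ker A
  omega

private lemma stmt18_rank_iff (n : ℕ) (A : (Fin n → ℂ) →ₗ[ℂ] (Fin n → ℂ)) :
    LinearMap.rank (A ∘ₗ A) = LinearMap.rank A ↔
      finrank ℂ (LinearMap.range (A ∘ₗ A)) = finrank ℂ (LinearMap.range A) := by
  rw [LinearMap.rank, LinearMap.rank, ← finrank_eq_rank, ← finrank_eq_rank]
  exact Nat.cast_inj

private lemma stmt18_ker_to_b (n : ℕ) (A : (Fin n → ℂ) →ₗ[ℂ] (Fin n → ℂ))
    (hker : LinearMap.ker (A ∘ₗ A) = LinearMap.ker A)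
    (B : (Fin n → ℂ) →ₗ[ℂ] (Fin n → ℂ))
    (hB : LinearMap.range (A ∘ₗ B) ≤ LinearMap.range B) :
    LinearMap.range (A ∘ₗ B) = LinearMap.range A ⊓ LinearMap.range B := by
  apply le_antisymm (le_inf (LinearMap.range_comp_le_range B A) hB)
  set V := LinearMap.range A ⊓ LinearMap.range B with hV
  have hmap : ∀ x ∈ V, A x ∈ V := by
    rintro x ⟨hxA, hxB⟩
    refine ⟨⟨x, rfl⟩, ?_⟩
    obtain ⟨z, rfl⟩ := hxB
    exact hB ⟨z, rfl⟩
  set g : V →ₗ[ℂ] V := A.restrict hmap with hg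
  have hinj : Function.Injective g := by
    rw [← LinearMap.ker_eq_bot, Submodule.eq_bot_iff]
    rintro ⟨x, hxV⟩ hx
    have hAx : A x = 0 := congrArg Subtype.val hx
    obtain ⟨y, rfl⟩ := hxV.1
    have : y ∈ LinearMap.ker (A ∘ₗ A) := hAx
    rw [hker] at this
    exact Subtype.ext this
  have hsurj : Function.Surjective g := by
    rwa [← LinearMap.injective_iff_surjective]
  rintro x hxV
  obtain ⟨⟨y, hyV⟩, hy⟩ := hsurj ⟨x, hxV⟩
  have : A y = x := congrArg Subtype.val hy
  obtain ⟨z, rfl⟩ := hyV.2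
  exact ⟨z, this⟩

/-- Theorem 5.3: For a linear map `A : ℂⁿ → ℂⁿ`, the following are equivalent:
(a) `ker(A²) = ker(A)`;
(b) for every linear `B : ℂⁿ → ℂⁿ` with `range(AB) ⊆ range(B)`, one has
    `range(AB) = range(A) ∩ range(B)`;
(c) `range(A²) = range(A)`;
(d) `rank(A²) = rank(A)`. -/
theorem stmt18 (n : ℕ) (A : (Fin n → ℂ) →ₗ[ℂ] (Fin n → ℂ)) :
    List.TFAE
      [LinearMap.ker (A ∘ₗ A) = LinearMap.ker A,
       ∀ B : (Fin n → ℂ) →ₗ[ℂ] (Fin n → ℂ),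
         LinearMap.range (A ∘ₗ B) ≤ LinearMap.range B →
           LinearMap.range (A ∘ₗ B) = LinearMap.range A ⊓ LinearMap.range B,
       LinearMap.range (A ∘ₗ A) = LinearMap.range A,
       LinearMap.rank (A ∘ₗ A) = LinearMap.rank A] := by
  tfae_have 1 → 3 := stmt18_ker_to_range n A
  tfae_have 3 → 4 := fun h => (stmt18_rank_iff n A).mpr (by rw [h])
  tfae_have 4 → 1 := fun h => stmt18_finrank_to_ker n A ((stmt18_rank_iff n A).mp h)
  tfae_have 1 → 2 := stmt18_ker_to_b n A
  tfae_have 2 → 3 := fun h => by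
    have := h A (LinearMap.range_comp_le_range A A)
    rwa [inf_idem] at this
  tfae_finish
end

section
/- Let n be a natural number and let A and B be linear operators on the finite-dimensional complex inner product space ℂⁿ satisfying range(A) = range(A*) and range(B) = range(B*) (i.e., A and B are EP matrices). Then range(AB) = range((AB)*) (i.e., AB is EP) if and only if range(AB) ⊆ range(B) and ker(A) ⊆ ker(AB). -/
open ContinuousLinearMap

variable {n : ℕ}

local notation "E" => EuclideanSpace ℂ (Fin n)

lemma ker_adj (T : E →L[ℂ] E) :
    LinearMap.ker (adjoint T : E →ₗ[ℂ] E) = (LinearMap.range (T : E →ₗ[ℂ] E))ᗮ := by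
  ext x
  simp only [LinearMap.mem_ker, Submodule.mem_orthogonal, ContinuousLinearMap.coe_coe]
  constructor
  · rintro h y ⟨z, rfl⟩
    rw [ContinuousLinearMap.coe_coe, ← adjoint_inner_right, h, inner_zero_right]
  · intro h
    rw [← inner_self_eq_zero (𝕜 := ℂ), adjoint_inner_right]
    exact h _ ⟨adjoint T x, rfl⟩

lemma range_adj (T : E →L[ℂ] E) :
    LinearMap.range (adjoint T : E →ₗ[ℂ] E) = (LinearMap.ker (T : E →ₗ[ℂ] E))ᗮ := by
  conv_lhs => rw [← Submodule.orthogonal_orthogonal (LinearMap.range (adjoint T : E →ₗ[ℂ] E))]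
  rw [← ker_adj, adjoint_adjoint]

lemma key (A B : E →L[ℂ] E)
    (hA : LinearMap.range (A : E →ₗ[ℂ] E) = LinearMap.range (adjoint A : E →ₗ[ℂ] E))
    (hB : LinearMap.range (B : E →ₗ[ℂ] E) = LinearMap.range (adjoint B : E →ₗ[ℂ] E))
    (hr : LinearMap.range (A ∘L B : E →ₗ[ℂ] E) ≤ LinearMap.range (B : E →ₗ[ℂ] E))
    (hk : LinearMap.ker (A : E →ₗ[ℂ] E) ≤ LinearMap.ker (A ∘L B : E →ₗ[ℂ] E)) :
    LinearMap.range (A ∘L B : E →ₗ[ℂ] E) ≤ LinearMap.range (adjoint (A ∘L B) : E →ₗ[ℂ] E) := by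
  set M := LinearMap.range (B : E →ₗ[ℂ] E) with hM
  set N := LinearMap.range (A : E →ₗ[ℂ] E) with hN
  have kerB : LinearMap.ker (B : E →ₗ[ℂ] E) = Mᗮ := by
    have := ker_adj (adjoint B); rwa [adjoint_adjoint, ← hB] at this
  have kerA : LinearMap.ker (A : E →ₗ[ℂ] E) = Nᗮ := by
    have := ker_adj (adjoint A); rwa [adjoint_adjoint, ← hA] at this
  have kerA' : LinearMap.ker (adjoint A : E →ₗ[ℂ] E) = Nᗮ := ker_adj A
  rw [range_adj]
  rintro w ⟨z, rfl⟩
  rw [Submodule.mem_orthogonal]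
  intro y hy
  -- decompose y = p + q with p ∈ M, q ∈ Mᗮ
  set p := (M.orthogonalProjectionOnto y : E) with hp
  have hpM : p ∈ M := (M.orthogonalProjectionOnto y).2
  have hqM : y - p ∈ Mᗮ := Submodule.sub_starProjection_mem_orthogonal (K := M) y
  have hpker : p ∈ LinearMap.ker (A ∘L B : E →ₗ[ℂ] E) := by
    have hq : (y - p) ∈ LinearMap.ker (A ∘L B : E →ₗ[ℂ] E) := by
      have : B (y - p) = 0 := by show (B : E →ₗ[ℂ] E) (y - p) = 0; rw [← LinearMap.mem_ker, kerB]; exact hqM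
      simp [LinearMap.mem_ker, ContinuousLinearMap.comp_apply, ContinuousLinearMap.coe_coe, this]
    have hpy : p = y - (y - p) := (sub_sub_cancel y p).symm
    rw [LinearMap.mem_ker] at *
    rw [hpy, map_sub]
    rw [LinearMap.mem_ker.mp hy, LinearMap.mem_ker.mp hq, sub_zero]
  -- the invariant subspace K = M ⊓ Nᗮ
  set K := M ⊓ Nᗮ with hK
  have hKB : ∀ x ∈ K, B x ∈ K := by
    intro x hx
    obtain ⟨hxM, hxN⟩ := Submodule.mem_inf.mp hx
    refine Submodule.mem_inf.mpr ⟨LinearMap.mem_range_self _ x, ?_⟩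
    have hx' : x ∈ LinearMap.ker (A : E →ₗ[ℂ] E) := by rw [kerA]; exact hxN
    have h2 := hk hx'
    rw [LinearMap.mem_ker, ContinuousLinearMap.coe_coe, ContinuousLinearMap.comp_apply] at h2
    rw [← kerA]
    exact LinearMap.mem_ker.mpr h2
  let f : K →ₗ[ℂ] K := (B : E →ₗ[ℂ] E).restrict hKB
  have hinj : Function.Injective f := by
    rw [← LinearMap.ker_eq_bot, LinearMap.ker_eq_bot']
    rintro ⟨x, hxM, hxN⟩ hfx
    have hBx : B x = 0 := congrArg Subtype.val hfx
    have : x ∈ LinearMap.ker (B : E →ₗ[ℂ] E) := hBx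
    rw [kerB] at this
    have : x = 0 := Submodule.disjoint_def.mp M.orthogonal_disjoint x hxM this
    exact Subtype.ext this
  have hsurj : Function.Surjective f := LinearMap.injective_iff_surjective.mp hinj
  -- p ∈ ker A
  have hpkerA : p ∈ LinearMap.ker (A : E →ₗ[ℂ] E) := by
    have hBpK : B p ∈ K := by
      refine Submodule.mem_inf.mpr ⟨LinearMap.mem_range_self _ p, ?_⟩
      rw [← kerA]
      have h3 := LinearMap.mem_ker.mp hpker
      rw [ContinuousLinearMap.coe_coe, ContinuousLinearMap.comp_apply] at h3
      exact LinearMap.mem_ker.mpr h3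
    obtain ⟨k, hkk⟩ := hsurj ⟨B p, hBpK⟩
    have hBk : B (k : E) = B p := congrArg Subtype.val hkk
    have hdiff : p - (k : E) ∈ LinearMap.ker (B : E →ₗ[ℂ] E) := by
      rw [LinearMap.mem_ker, ContinuousLinearMap.coe_coe, map_sub, hBk, sub_self]
    rw [kerB] at hdiff
    have hdiffM : p - (k : E) ∈ M := M.sub_mem hpM k.2.1
    have : p - (k : E) = 0 :=
      Submodule.disjoint_def.mp M.orthogonal_disjoint _ hdiffM hdiff
    have hpk : p = (k : E) := sub_eq_zero.mp this
    rw [kerA, hpk]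
    exact (Submodule.mem_inf.mp k.2).2
  -- conclude
  have h1 : (inner ℂ (p : E) ((A ∘L B) z) : ℂ) = 0 := by
    rw [ContinuousLinearMap.comp_apply, ← adjoint_inner_left]
    have : adjoint A p = 0 := by
      show (adjoint A : E →ₗ[ℂ] E) p = 0
      rw [← LinearMap.mem_ker, kerA', ← kerA]; exact hpkerA
    rw [this, inner_zero_left]
  have h2 : (inner ℂ (y - p) ((A ∘L B) z) : ℂ) = 0 := by
    have hmem : (A ∘L B) z ∈ M := hr (LinearMap.mem_range_self _ z)
    exact (Submodule.mem_orthogonal Mᗮ _).mp (Submodule.le_orthogonal_orthogonal M hmem) _ hqM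
  have hyp : y = p + (y - p) := by abel
  calc (inner ℂ y ((A ∘L B) z) : ℂ) = inner ℂ (p + (y - p)) ((A ∘L B) z) := by rw [← hyp]
    _ = inner ℂ (p:E) ((A ∘L B) z) + inner ℂ (y - p) ((A ∘L B) z) := inner_add_left _ _ _
    _ = 0 := by rw [h1, h2, add_zero]

/-- Corollary 5.4 (Hartwig–Katz Theorem): Let `A` and `B` be EP operators on `ℂⁿ`
(i.e. `range(A) = range(A*)` and `range(B) = range(B*)`).  Then `AB` is EP
(`range(AB) = range((AB)*)`) if and only if `range(AB) ⊆ range(B)` and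
`ker(A) ⊆ ker(AB)`. -/
theorem stmt19 (n : ℕ)
    (A B : EuclideanSpace ℂ (Fin n) →L[ℂ] EuclideanSpace ℂ (Fin n))
    (hA : LinearMap.range (A : EuclideanSpace ℂ (Fin n) →ₗ[ℂ] EuclideanSpace ℂ (Fin n)) = LinearMap.range (ContinuousLinearMap.adjoint A : EuclideanSpace ℂ (Fin n) →ₗ[ℂ] EuclideanSpace ℂ (Fin n)))
    (hB : LinearMap.range (B : EuclideanSpace ℂ (Fin n) →ₗ[ℂ] EuclideanSpace ℂ (Fin n)) = LinearMap.range (ContinuousLinearMap.adjoint B : EuclideanSpace ℂ (Fin n) →ₗ[ℂ] EuclideanSpace ℂ (Fin n))) :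
    LinearMap.range (A ∘L B : EuclideanSpace ℂ (Fin n) →ₗ[ℂ] EuclideanSpace ℂ (Fin n)) = LinearMap.range (ContinuousLinearMap.adjoint (A ∘L B) : EuclideanSpace ℂ (Fin n) →ₗ[ℂ] EuclideanSpace ℂ (Fin n)) ↔
      LinearMap.range (A ∘L B : EuclideanSpace ℂ (Fin n) →ₗ[ℂ] EuclideanSpace ℂ (Fin n)) ≤ LinearMap.range (B : EuclideanSpace ℂ (Fin n) →ₗ[ℂ] EuclideanSpace ℂ (Fin n)) ∧
        LinearMap.ker (A : EuclideanSpace ℂ (Fin n) →ₗ[ℂ] EuclideanSpace ℂ (Fin n)) ≤ LinearMap.ker ((A ∘L B : EuclideanSpace ℂ (Fin n) →ₗ[ℂ] EuclideanSpace ℂ (Fin n))) := by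
  constructor
  · intro h
    constructor
    · rw [h, adjoint_comp]
      rintro x ⟨z, rfl⟩
      rw [hB]
      exact LinearMap.mem_range_self _ _
    · have kerA : LinearMap.ker (A : EuclideanSpace ℂ (Fin n) →ₗ[ℂ] EuclideanSpace ℂ (Fin n)) = (LinearMap.range (A : EuclideanSpace ℂ (Fin n) →ₗ[ℂ] EuclideanSpace ℂ (Fin n)))ᗮ := by
        have := ker_adj (adjoint A); rwa [adjoint_adjoint, ← hA] at this
      have kerAB : LinearMap.ker (A ∘L B : EuclideanSpace ℂ (Fin n) →ₗ[ℂ] EuclideanSpace ℂ (Fin n))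
          = (LinearMap.range (adjoint (A ∘L B) : EuclideanSpace ℂ (Fin n) →ₗ[ℂ] EuclideanSpace ℂ (Fin n)))ᗮ := by
        have := ker_adj (adjoint (A ∘L B)); rwa [adjoint_adjoint] at this
      rw [kerAB, ← h, kerA]
      apply Submodule.orthogonal_le
      rintro x ⟨z, rfl⟩
      exact ⟨B z, rfl⟩
  · rintro ⟨hr, hk⟩
    refine le_antisymm (key A B hA hB hr hk) ?_
    have hA' : LinearMap.range (adjoint B : EuclideanSpace ℂ (Fin n) →ₗ[ℂ] EuclideanSpace ℂ (Fin n))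
        = LinearMap.range (adjoint (adjoint B) : EuclideanSpace ℂ (Fin n) →ₗ[ℂ] EuclideanSpace ℂ (Fin n)) := by rw [adjoint_adjoint, ← hB]
    have hB' : LinearMap.range (adjoint A : EuclideanSpace ℂ (Fin n) →ₗ[ℂ] EuclideanSpace ℂ (Fin n))
        = LinearMap.range (adjoint (adjoint A) : EuclideanSpace ℂ (Fin n) →ₗ[ℂ] EuclideanSpace ℂ (Fin n)) := by rw [adjoint_adjoint, ← hA]
    have hr' : LinearMap.range (adjoint B ∘L adjoint A : EuclideanSpace ℂ (Fin n) →ₗ[ℂ] EuclideanSpace ℂ (Fin n))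
        ≤ LinearMap.range (adjoint A : EuclideanSpace ℂ (Fin n) →ₗ[ℂ] EuclideanSpace ℂ (Fin n)) := by
      rw [← adjoint_comp, range_adj, range_adj]
      exact Submodule.orthogonal_le hk
    have hk' : LinearMap.ker (adjoint B : EuclideanSpace ℂ (Fin n) →ₗ[ℂ] EuclideanSpace ℂ (Fin n))
        ≤ LinearMap.ker (adjoint B ∘L adjoint A : EuclideanSpace ℂ (Fin n) →ₗ[ℂ] EuclideanSpace ℂ (Fin n)) := by
      intro x hx
      show (adjoint B : EuclideanSpace ℂ (Fin n) →ₗ[ℂ] EuclideanSpace ℂ (Fin n)) ((adjoint A : EuclideanSpace ℂ (Fin n) →ₗ[ℂ] EuclideanSpace ℂ (Fin n)) x) = 0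
      rw [← LinearMap.mem_ker]
      rw [ker_adj] at hx ⊢
      rw [Submodule.mem_orthogonal]
      rintro u ⟨v, rfl⟩
      simp only [ContinuousLinearMap.coe_coe]
      rw [adjoint_inner_right]
      exact (Submodule.mem_orthogonal _ x).mp hx _ (hr ⟨v, rfl⟩)
    have hkey := key (adjoint B) (adjoint A) hA' hB' hr' hk'
    rw [← adjoint_comp, adjoint_adjoint] at hkey
    exact hkey
end
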